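/- Let ξ ∈ Φ and suppose Λ ⊆ h_ξ(Π_ξ) satisfies f_{g(ξ)}(Λ) = Λ. Set S = h_ξ⁻¹(Λ) (the preimage of Λ under the invertible affine map h_ξ) and Λ̃ = S ∪ f_ξ(S). Then f_ξ(Λ̃) = Λ̃, i.e. Λ̃ is an invariant set of f_ξ. -/

import Mathlib

noncomputable section

/-- Parameters ξ = (τL, δL, τR, δR) of the 2D border-collision normal form. -/
structure Param where
  tL : ℝ
  dL : ℝ
  tR : ℝ
  dR : ℝ

/-- The region Φ where the BCNF has two saddle fixed points. -/
def Phi (ξ : Param) : Prop := |ξ.dL + 1| < ξ.tL ∧ ξ.tR < -|ξ.dR + 1|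

/-- The 2D border-collision normal form map. -/
def fBC (ξ : Param) (p : ℝ × ℝ) : ℝ × ℝ :=
  if p.1 ≤ 0 then (ξ.tL * p.1 + p.2 + 1, -ξ.dL * p.1)
  else (ξ.tR * p.1 + p.2 + 1, -ξ.dR * p.1)

def lamLu (ξ : Param) : ℝ := (ξ.tL + Real.sqrt (ξ.tL^2 - 4*ξ.dL)) / 2
def lamLs (ξ : Param) : ℝ := (ξ.tL - Real.sqrt (ξ.tL^2 - 4*ξ.dL)) / 2
def lamRu (ξ : Param) : ℝ := (ξ.tR - Real.sqrt (ξ.tR^2 - 4*ξ.dR)) / 2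
def lamRs (ξ : Param) : ℝ := (ξ.tR + Real.sqrt (ξ.tR^2 - 4*ξ.dR)) / 2

/-- The renormalisation operator g. -/
def gmap (ξ : Param) : Param :=
  ⟨ξ.tR^2 - 2*ξ.dR, ξ.dR^2, ξ.tL*ξ.tR - ξ.dL - ξ.dR, ξ.dL*ξ.dR⟩

def alphaF (ξ : Param) : ℝ := ξ.tL*ξ.tR + (ξ.dL - 1)*(ξ.dR - 1)

def phiPlus (ξ : Param) : ℝ :=
  ξ.dR - (ξ.tR + ξ.dL + ξ.dR - (1 + ξ.tR) * lamLu ξ) * lamLu ξ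

def phiMinus (ξ : Param) : ℝ :=
  ξ.dR - (ξ.dR + ξ.tR - (1 + lamRu ξ) * lamLu ξ) * lamLu ξ

def phiMin (ξ : Param) : ℝ := min (phiPlus ξ) (phiMinus ξ)

/-- The skew tent map with parameters (a, b). -/
def stm (a b x : ℝ) : ℝ := if x ≤ 0 then a*x + 1 else b*x + 1

/-- The set of points mapping into the right half-plane. -/
def PiSet (ξ : Param) : Set (ℝ × ℝ) := {p | 0 ≤ (fBC ξ p).1}

/-- The conjugating affine change of coordinates h_ξ. -/
def hMap (ξ : Param) (p : ℝ × ℝ) : ℝ × ℝ :=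
  (p.1 / (ξ.tR + ξ.dR + 1), (ξ.dR * p.1 + ξ.tR * p.2 - ξ.dR) / (ξ.tR + ξ.dR + 1))

def Rset1 (n : ℕ) : Set Param :=
  {ξ | Phi ξ ∧ 0 < ξ.dL ∧ 0 < ξ.dR ∧ 0 < phiPlus (gmap^[n] ξ) ∧ phiPlus (gmap^[n+1] ξ) ≤ 0}

def Rset2 (n : ℕ) : Set Param :=
  {ξ | Phi ξ ∧ ξ.dL < 0 ∧ ξ.dR < 0 ∧ 0 < phiPlus (gmap^[n] ξ) ∧
    phiPlus (gmap^[n+1] ξ) ≤ 0 ∧ alphaF ξ < 0}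

def Rset3 (n : ℕ) : Set Param :=
  {ξ | Phi ξ ∧ 0 < ξ.dL ∧ ξ.dR < 0 ∧ 0 < phiMin (gmap^[n] ξ) ∧
    phiMin (gmap^[n+1] ξ) ≤ 0 ∧ alphaF ξ < 0}

def Rset4 (n : ℕ) : Set Param :=
  {ξ | Phi ξ ∧ ξ.dL < 0 ∧ 0 < ξ.dR ∧ 0 < phiMin (gmap^[n] ξ) ∧
    phiMin (gmap^[n+1] ξ) ≤ 0 ∧ alphaF ξ < 0 ∧ alphaF (gmap ξ) < 0}

/-- Renormalisation operator for skew tent maps. -/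
def g0 (p : ℝ × ℝ) : ℝ × ℝ := (p.2^2, p.1*p.2)
def phi0 (p : ℝ × ℝ) : ℝ := p.1*p.2 + p.1 - p.2
def alpha0 (p : ℝ × ℝ) : ℝ := p.1*p.2 + 1

/-- The regions R_n of skew tent map parameter space. -/
def RsetST (n : ℕ) : Set (ℝ × ℝ) :=
  {p | p.2 < -1 ∧ 0 < phi0 (g0^[n] p) ∧ phi0 (g0^[n+1] p) ≤ 0 ∧ alpha0 p < 0}


lemma phi_d_neg {ξ : Param} (hξ : Phi ξ) : ξ.tR + ξ.dR + 1 < 0 := by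
  have h := hξ.2
  have := le_abs_self (ξ.dR + 1)
  linarith

lemma phi_tR_neg {ξ : Param} (hξ : Phi ξ) : ξ.tR < 0 := by
  have h := hξ.2
  have := abs_nonneg (ξ.dR + 1)
  linarith

lemma fBC_of_nonneg (ξ : Param) {p : ℝ × ℝ} (hx : 0 ≤ p.1) :
    fBC ξ p = (ξ.tR * p.1 + p.2 + 1, -ξ.dR * p.1) := by
  unfold fBC
  split_ifs with h
  · have hx0 : p.1 = 0 := le_antisymm h hx
    rw [hx0]; ring_nf
  · rfl

lemma fBC_of_nonpos (ξ : Param) {p : ℝ × ℝ} (hx : p.1 ≤ 0) :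
    fBC ξ p = (ξ.tL * p.1 + p.2 + 1, -ξ.dL * p.1) := by
  unfold fBC; rw [if_pos hx]

lemma hMap_injective {ξ : Param} (hξ : Phi ξ) : Function.Injective (hMap ξ) := by
  have hd : ξ.tR + ξ.dR + 1 ≠ 0 := ne_of_lt (phi_d_neg hξ)
  have ht : ξ.tR ≠ 0 := ne_of_lt (phi_tR_neg hξ)
  intro p q h
  have h1 := congrArg Prod.fst h
  have h2 := congrArg Prod.snd h
  simp only [hMap] at h1 h2
  have e1 : p.1 = q.1 := by field_simp at h1; exact h1
  have e2 : p.2 = q.2 := by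
    rw [e1] at h2
    field_simp at h2
    exact mul_left_cancel₀ ht (by linarith)
  exact Prod.ext e1 e2

lemma hMap_surjective {ξ : Param} (hξ : Phi ξ) : Function.Surjective (hMap ξ) := by
  have hd : ξ.tR + ξ.dR + 1 ≠ 0 := ne_of_lt (phi_d_neg hξ)
  have ht : ξ.tR ≠ 0 := ne_of_lt (phi_tR_neg hξ)
  intro q
  refine ⟨((ξ.tR + ξ.dR + 1) * q.1,
    (q.2 * (ξ.tR + ξ.dR + 1) + ξ.dR - ξ.dR * ((ξ.tR + ξ.dR + 1) * q.1)) / ξ.tR), ?_⟩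
  unfold hMap
  refine Prod.ext ?_ ?_ <;> field_simp <;> ring

lemma key_conj {ξ : Param} (hξ : Phi ξ) {p : ℝ × ℝ} (hp : 0 ≤ (fBC ξ p).1) :
    hMap ξ (fBC ξ (fBC ξ p)) = fBC (gmap ξ) (hMap ξ p) := by
  have hd : ξ.tR + ξ.dR + 1 < 0 := phi_d_neg hξ
  have hdne : ξ.tR + ξ.dR + 1 ≠ 0 := ne_of_lt hd
  rcases le_or_gt p.1 0 with hx | hx
  · rw [fBC_of_nonpos ξ hx] at hp ⊢
    rw [fBC_of_nonneg ξ hp]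
    have hq : 0 ≤ (hMap ξ p).1 := by
      unfold hMap
      exact div_nonneg_iff.mpr (Or.inr ⟨hx, le_of_lt hd⟩)
    rw [fBC_of_nonneg (gmap ξ) hq]
    unfold hMap gmap
    refine Prod.ext ?_ ?_ <;> simp only <;> field_simp <;> ring
  · have hx' : 0 ≤ p.1 := le_of_lt hx
    rw [fBC_of_nonneg ξ hx'] at hp ⊢
    rw [fBC_of_nonneg ξ hp]
    have hq : (hMap ξ p).1 ≤ 0 := by
      unfold hMap
      exact div_nonpos_iff.mpr (Or.inl ⟨hx', le_of_lt hd⟩)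
    rw [fBC_of_nonpos (gmap ξ) hq]
    unfold hMap gmap
    refine Prod.ext ?_ ?_ <;> simp only <;> field_simp <;> ring

theorem stmt_9 (ξ : Param) (hξ : Phi ξ) (Λ : Set (ℝ × ℝ))
    (hsub : Λ ⊆ hMap ξ '' PiSet ξ) (hinv : fBC (gmap ξ) '' Λ = Λ) :
    fBC ξ '' (hMap ξ ⁻¹' Λ ∪ fBC ξ '' (hMap ξ ⁻¹' Λ))
      = hMap ξ ⁻¹' Λ ∪ fBC ξ '' (hMap ξ ⁻¹' Λ) := by
  set S : Set (ℝ × ℝ) := hMap ξ ⁻¹' Λ with hS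
  have hinj := hMap_injective hξ
  have hsurj := hMap_surjective hξ
  have hSsub : S ⊆ PiSet ξ := by
    intro p hp
    obtain ⟨q, hq, hqe⟩ := hsub hp
    rwa [← hinj hqe]
  have hfT : fBC ξ '' (fBC ξ '' S) = S := by
    ext q
    constructor
    · rintro ⟨r, ⟨p, hp, rfl⟩, rfl⟩
      show hMap ξ (fBC ξ (fBC ξ p)) ∈ Λ
      rw [key_conj hξ (hSsub hp)]
      rw [← hinv]
      exact Set.mem_image_of_mem _ hp
    · intro hq
      have hq' : hMap ξ q ∈ fBC (gmap ξ) '' Λ := by rw [hinv]; exact hq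
      obtain ⟨l, hl, hle⟩ := hq'
      obtain ⟨p, rfl⟩ := hsurj l
      have hpS : p ∈ S := hl
      have : hMap ξ (fBC ξ (fBC ξ p)) = hMap ξ q := by
        rw [key_conj hξ (hSsub hpS)]; exact hle
      have heq : fBC ξ (fBC ξ p) = q := hinj this
      exact ⟨fBC ξ p, Set.mem_image_of_mem _ hpS, heq⟩
  rw [Set.image_union, hfT, Set.union_comm]
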